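/- arXiv:1511.06991 — 2 statements merged into one kernel-verified Lean document; each statement's English description precedes it below -/
import Mathlib

section
/- Fix n divisible by 4, alpha > 1, and s* = (sqrt(3)-1)/2. Let H = -(sqrt(3)/2)X - (1/2)Z + (1/2)H_sp, where H_sp = (3/4) n^alpha |n/4><n/4|, and X, Z are the symmetric-subspace angular momentum matrices. Then the spectral gap of H satisfies gap(n) <= 3n/(3n + 3n^alpha - 8) for n large enough that 3n^alpha > 8; in particular gap(n) = O(n^{1-alpha}) tends to 0 as n tends to infinity. -/
open Matrix

/-- The transverse-field operator X restricted to the symmetric subspace: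
⟨k-1|X|k⟩ = ⟨k|X|k-1⟩ = (1/2)√(k(n+1-k)), zero diagonal. -/
noncomputable def Xop (n : ℕ) : Matrix (Fin (n + 1)) (Fin (n + 1)) ℝ :=
  fun i j =>
    if i.val + 1 = j.val then (1/2) * Real.sqrt ((j.val : ℝ) * ((n : ℝ) + 1 - (j.val : ℝ)))
    else if j.val + 1 = i.val then (1/2) * Real.sqrt ((i.val : ℝ) * ((n : ℝ) + 1 - (i.val : ℝ)))
    else 0

/-- The longitudinal operator Z, diagonal with entries n/2 - k. -/
noncomputable def Zop (n : ℕ) : Matrix (Fin (n + 1)) (Fin (n + 1)) ℝ :=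
  Matrix.diagonal (fun k => (n : ℝ)/2 - (k.val : ℝ))

/-- The spikeless Hamiltonian H₀ = -(√3/2) X - (1/2) Z at the critical point. -/
noncomputable def H0 (n : ℕ) : Matrix (Fin (n + 1)) (Fin (n + 1)) ℝ :=
  (-(Real.sqrt 3 / 2)) • Xop n + (-(1/2 : ℝ)) • Zop n

/-- The ground state of the spikeless Hamiltonian,
⟨k|ψ₀⟩ = √C(n,k) (1/2)^k (√3/2)^(n-k). -/
noncomputable def psi0 (n : ℕ) : Fin (n + 1) → ℝ :=
  fun k => Real.sqrt (n.choose k.val) * (1/2)^k.val * (Real.sqrt 3 / 2)^(n - k.val)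


/-- The first excited state of the spikeless Hamiltonian,
⟨k|ψ₁⟩ = √(C(n,k)/(3n)) (1/2)^k (√3/2)^(n-k) (n - 4k). -/
noncomputable def psi1 (n : ℕ) : Fin (n + 1) → ℝ :=
  fun k => Real.sqrt ((n.choose k.val : ℝ) / (3 * (n : ℝ))) * (1/2)^k.val *
    (Real.sqrt 3 / 2)^(n - k.val) * ((n : ℝ) - 4 * (k.val : ℝ))

/-- The index n/4 where the spike sits. -/
def spikeIdx (n : ℕ) : Fin (n + 1) := ⟨n / 4, Nat.lt_succ_of_le (Nat.div_le_self n 4)⟩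

/-- The width-1 spike Hamiltonian at the critical point s* = (√3-1)/2:
H = -(√3/2)X - (1/2)Z + (1/2)·(3/4)n^α |n/4⟩⟨n/4|. -/
noncomputable def Hspike (n : ℕ) (α : ℝ) : Matrix (Fin (n + 1)) (Fin (n + 1)) ℝ :=
  H0 n + Matrix.single (spikeIdx n) (spikeIdx n) ((3/8) * (n : ℝ)^α)

/-- The eigenvalues of a Hermitian real matrix, sorted in ascending order. -/
noncomputable def sortedEigenvalues {N : ℕ} {A : Matrix (Fin N) (Fin N) ℝ}
    (hA : A.IsHermitian) : Fin N → ℝ :=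
  hA.eigenvalues ∘ Tuple.sort hA.eigenvalues

theorem shift_conj (N : ℕ) (A : Matrix (Fin N) (Fin N) ℝ) (hA : A.IsHermitian) (c : ℝ) :
    A - c • (1 : Matrix (Fin N) (Fin N) ℝ)
      = (hA.eigenvectorUnitary : Matrix (Fin N) (Fin N) ℝ)
        * diagonal (fun i => hA.eigenvalues i - c)
        * star (hA.eigenvectorUnitary : Matrix (Fin N) (Fin N) ℝ) := by
  set U := (hA.eigenvectorUnitary : Matrix (Fin N) (Fin N) ℝ) with hUdef
  have hU : U * star U = 1 := (Matrix.mem_unitaryGroup_iff).mp (hA.eigenvectorUnitary).2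
  have h1 : diagonal (fun i => hA.eigenvalues i - c)
      = diagonal (RCLike.ofReal ∘ hA.eigenvalues) - c • (1 : Matrix (Fin N) (Fin N) ℝ) := by
    have h0 : (RCLike.ofReal ∘ hA.eigenvalues : Fin N → ℝ) = hA.eigenvalues := rfl
    rw [smul_one_eq_diagonal, diagonal_sub, h0]
  calc A - c • 1 = U * diagonal (RCLike.ofReal ∘ hA.eigenvalues) * star U - c • (U * star U) := by
        rw [hU]; congr 1; exact hA.spectral_theorem
    _ = _ := by
        rw [h1, mul_sub, sub_mul, Matrix.mul_smul, Matrix.smul_mul, mul_one]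

theorem quad_lower (N : ℕ) (A : Matrix (Fin N) (Fin N) ℝ) (hA : A.IsHermitian) (c : ℝ)
    (h : ∀ i, c ≤ hA.eigenvalues i) (w : Fin N → ℝ) :
    c * (w ⬝ᵥ w) ≤ w ⬝ᵥ (A *ᵥ w) := by
  have hps : (A - c • (1 : Matrix (Fin N) (Fin N) ℝ)).PosSemidef := by
    rw [shift_conj N A hA c]
    have hd : (diagonal (fun i => hA.eigenvalues i - c)).PosSemidef :=
      posSemidef_diagonal_iff.mpr fun i => by linarith [h i]
    have := hd.mul_mul_conjTranspose_same (hA.eigenvectorUnitary : Matrix (Fin N) (Fin N) ℝ)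
    simpa [Matrix.star_eq_conjTranspose, mul_assoc] using this
  have h2 := hps.dotProduct_mulVec_nonneg w
  simp only [Matrix.sub_mulVec, dotProduct_sub, star_trivial] at h2
  have h3 : ((c • (1 : Matrix (Fin N) (Fin N) ℝ)) *ᵥ w) = c • w := by
    rw [Matrix.smul_mulVec, Matrix.one_mulVec]
  rw [h3, dotProduct_smul, smul_eq_mul] at h2
  linarith

theorem eig_exists (N : ℕ) (A : Matrix (Fin N) (Fin N) ℝ) (hA : A.IsHermitian) (μ : ℝ)
    (u : Fin N → ℝ) (hu : u ≠ 0) (hAu : A *ᵥ u = μ • u) : ∃ j, hA.eigenvalues j = μ := by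
  by_contra hcon
  push_neg at hcon
  have hdet : (A - μ • (1 : Matrix (Fin N) (Fin N) ℝ)).det = 0 := by
    rw [← Matrix.exists_mulVec_eq_zero_iff]
    refine ⟨u, hu, ?_⟩
    rw [Matrix.sub_mulVec, hAu, Matrix.smul_mulVec, Matrix.one_mulVec, sub_self]
  rw [shift_conj N A hA μ] at hdet
  set U := (hA.eigenvectorUnitary : Matrix (Fin N) (Fin N) ℝ)
  have hU : U * star U = 1 := (Matrix.mem_unitaryGroup_iff).mp (hA.eigenvectorUnitary).2
  rw [Matrix.det_mul, Matrix.det_mul, Matrix.det_diagonal] at hdet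
  have hUdet : U.det * (star U).det = 1 := by rw [← Matrix.det_mul, hU, Matrix.det_one]
  have h5 : ∏ i, (hA.eigenvalues i - μ) = 0 := by
    rcases mul_eq_zero.mp hdet with h | h
    · rcases mul_eq_zero.mp h with h' | h'
      · exact absurd h' (left_ne_zero_of_mul_eq_one hUdet)
      · exact h'
    · exact absurd h (right_ne_zero_of_mul_eq_one hUdet)
  obtain ⟨i, -, hi⟩ := Finset.prod_eq_zero_iff.mp h5
  exact hcon i (by linarith [sub_eq_zero.mp hi])


theorem collatz_bound (N : ℕ) (A : Matrix (Fin (N+1)) (Fin (N+1)) ℝ)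
    (hoff : ∀ i j, i ≠ j → A i j ≤ 0) (v : Fin (N+1) → ℝ) (hv : ∀ k, 0 < v k)
    (θ : ℝ) (hθ : ∀ k, θ * v k ≤ (A *ᵥ v) k)
    (μ : ℝ) (u : Fin (N+1) → ℝ) (hu : u ≠ 0) (hAu : A *ᵥ u = μ • u) : θ ≤ μ := by
  obtain ⟨K, -, hK⟩ := Finset.exists_max_image Finset.univ (fun k => |u k| / v k)
    ⟨0, Finset.mem_univ 0⟩
  have hKmax : ∀ j, |u j| / v j ≤ |u K| / v K := fun j => hK j (Finset.mem_univ j)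
  have huK : 0 < |u K| := by
    obtain ⟨j, hj⟩ := Function.ne_iff.mp hu
    have h1 : 0 < |u j| / v j := div_pos (abs_pos.mpr hj) (hv j)
    have h2 := lt_of_lt_of_le h1 (hKmax j)
    have h4 := mul_pos h2 (hv K)
    rwa [div_mul_cancel₀ _ (ne_of_gt (hv K))] at h4
  set w : Fin (N+1) → ℝ := if 0 ≤ u K then u else -u with hw
  have hwK : w K = |u K| := by
    by_cases h : 0 ≤ u K
    · simp [hw, h, abs_of_nonneg h]
    · simp [hw, h, abs_of_neg (lt_of_not_ge h)]
  have hAw : A *ᵥ w = μ • w := by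
    by_cases h : 0 ≤ u K
    · simp [hw, h, hAu]
    · simp [hw, h, Matrix.mulVec_neg, hAu]
  have habs : ∀ j, |w j| = |u j| := by
    intro j; by_cases h : 0 ≤ u K <;> simp [hw, h]
  set t : ℝ := w K / v K with htdef
  have hvK := hv K
  have htvK : t * v K = w K := div_mul_cancel₀ _ (ne_of_gt hvK)
  have hkey : ∀ j, t * (A K j * v j) ≤ A K j * w j := by
    intro j
    by_cases hj : j = K
    · subst hj
      have : t * (A j j * v j) = A j j * w j := by rw [mul_left_comm, htvK]
      exact le_of_eq this
    · have h1 : w j ≤ t * v j := by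
        have h2 : |u j| / v j ≤ |u K| / v K := hKmax j
        have h3 : |u j| ≤ |u K| / v K * v j := by
          rw [div_le_div_iff₀ (hv j) (hv K)] at h2
          rw [div_mul_eq_mul_div, le_div_iff₀ (hv K)]
          linarith
        calc w j ≤ |w j| := le_abs_self _
          _ = |u j| := habs j
          _ = |u K| / v K * v j - (|u K| / v K * v j - |u j|) := by ring
          _ ≤ t * v j := by rw [htdef, hwK]; linarith
      have h4 : A K j ≤ 0 := hoff K j (Ne.symm hj)
      calc t * (A K j * v j) = A K j * (t * v j) := by ring
        _ ≤ A K j * w j := mul_le_mul_of_nonpos_left h1 h4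
  have ht0 : 0 ≤ t := by rw [htdef, hwK]; positivity
  have hsum : θ * w K ≤ μ * w K := by
    have e1 : (A *ᵥ w) K = ∑ j, A K j * w j := rfl
    have e2 : (A *ᵥ v) K = ∑ j, A K j * v j := rfl
    have h5 : ∑ j, t * (A K j * v j) ≤ ∑ j, A K j * w j :=
      Finset.sum_le_sum fun j _ => hkey j
    rw [← Finset.mul_sum, ← e2] at h5
    have h6 : t * (θ * v K) ≤ t * ((A *ᵥ v) K) := mul_le_mul_of_nonneg_left (hθ K) ht0
    have h7 : (A *ᵥ w) K = μ * w K := by rw [hAw]; rfl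
    calc θ * w K = t * (θ * v K) := by rw [← htvK]; ring
      _ ≤ t * ((A *ᵥ v) K) := h6
      _ ≤ ∑ j, A K j * w j := h5
      _ = μ * w K := by rw [← e1, h7]
  have hwKpos : 0 < w K := by rw [hwK]; exact huK
  exact le_of_mul_le_mul_right hsum hwKpos


noncomputable def aa (n k : ℕ) : ℝ := (1/2) * Real.sqrt (k * ((n:ℝ) + 1 - k))
noncomputable def pp (n k : ℕ) : ℝ :=
  Real.sqrt (n.choose k) * (1/2)^k * (Real.sqrt 3 / 2)^(n-k)

lemma sqrt3_pos : (0:ℝ) < Real.sqrt 3 := Real.sqrt_pos.mpr (by norm_num)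
lemma sqrt3_sq : Real.sqrt 3 * Real.sqrt 3 = 3 := Real.mul_self_sqrt (by norm_num)

lemma pp_nonneg (n k : ℕ) : 0 ≤ pp n k := by unfold pp; positivity

lemma pp_pos {n k : ℕ} (h : k ≤ n) : 0 < pp n k := by
  unfold pp
  have h1 : (0:ℝ) < (n.choose k : ℝ) := by exact_mod_cast Nat.choose_pos h
  have := sqrt3_pos
  positivity

lemma pp_zero {n k : ℕ} (h : n < k) : pp n k = 0 := by
  unfold pp; rw [Nat.choose_eq_zero_of_lt h]; simp

lemma aa_zero_of_gt {n k : ℕ} (h : n + 1 ≤ k) : aa n k = 0 := by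
  unfold aa
  have h1 : (n:ℝ) + 1 - k ≤ 0 := by
    have : (n:ℝ) + 1 ≤ k := by exact_mod_cast h
    linarith
  have h2 : (k:ℝ) * ((n:ℝ) + 1 - k) ≤ 0 :=
    mul_nonpos_of_nonneg_of_nonpos (by positivity) h1
  rw [Real.sqrt_eq_zero'.mpr h2, mul_zero]

lemma Rplus (n k : ℕ) : aa n (k+1) * pp n (k+1) = Real.sqrt 3 * ((n:ℝ) - k)/6 * pp n k := by
  rcases lt_trichotomy k n with hk | hk | hk
  · have hnk0 : (0:ℝ) ≤ (n:ℝ) - k := by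
      have : (k:ℝ) ≤ n := by exact_mod_cast hk.le
      linarith
    have key : Real.sqrt (((k+1 : ℕ):ℝ) * ((n:ℝ) - k)) * Real.sqrt (n.choose (k+1))
        = ((n:ℝ) - k) * Real.sqrt (n.choose k) := by
      rw [← Real.sqrt_mul (by positivity)]
      have hnat : n.choose (k+1) * (k+1) = n.choose k * (n - k) := Nat.choose_succ_right_eq n k
      have harg : ((k+1 : ℕ):ℝ) * ((n:ℝ) - k) * (n.choose (k+1))
          = (((n:ℝ)-k) * ((n:ℝ)-k)) * (n.choose k) := by
        have hc := congrArg (fun x : ℕ => (x:ℝ)) hnat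
        simp only [Nat.cast_mul] at hc
        rw [Nat.cast_sub hk.le] at hc
        push_cast at hc ⊢
        nlinarith [hc]
      rw [harg, Real.sqrt_mul (by positivity), Real.sqrt_mul_self hnk0]
    unfold aa pp
    have e2 : (n:ℝ) + 1 - ((k+1 : ℕ):ℝ) = (n:ℝ) - k := by push_cast; ring
    have e3 : n - (k+1) + 1 = n - k := by omega
    have e4 : (Real.sqrt 3/2)^(n-k) = (Real.sqrt 3/2)^(n-(k+1)) * (Real.sqrt 3/2) := by
      rw [← pow_succ, e3]
    have e5 : ((1:ℝ)/2)^(k+1) = (1/2)^k * (1/2) := by rw [pow_succ]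
    rw [e2, e5, e4]
    linear_combination (((1/2:ℝ)^k) * (Real.sqrt 3/2)^(n-(k+1))/4) * key
      - (((n:ℝ)-k) * Real.sqrt (n.choose k) * ((1/2:ℝ)^k) * (Real.sqrt 3/2)^(n-(k+1))/12)
        * sqrt3_sq
  · subst hk
    rw [pp_zero (by omega), mul_zero, sub_self, mul_zero, zero_div, zero_mul]
  · rw [pp_zero hk, pp_zero (by omega), mul_zero, mul_zero]

lemma Rminus (n k : ℕ) : aa n k * pp n (k-1) = (Real.sqrt 3/2) * k * pp n k := by
  rcases Nat.eq_zero_or_pos k with h0 | h0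
  · subst h0
    unfold aa
    simp
  rcases le_or_gt k n with hk | hk
  · -- 1 ≤ k ≤ n
    have hcast : ((n - (k-1) : ℕ):ℝ) = (n:ℝ) + 1 - k := by
      have h1 : k - 1 ≤ n := by omega
      rw [Nat.cast_sub h1]
      have : ((k-1 : ℕ):ℝ) = (k:ℝ) - 1 := by
        rw [Nat.cast_sub h0]; push_cast; ring
      rw [this]; ring
    have hk0 : (0:ℝ) ≤ (k:ℝ) := by positivity
    have key : Real.sqrt ((k:ℝ) * ((n:ℝ) + 1 - k)) * Real.sqrt (n.choose (k-1))
        = (k:ℝ) * Real.sqrt (n.choose k) := by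
      have hpos : (0:ℝ) ≤ (n:ℝ) + 1 - k := by
        have : (k:ℝ) ≤ n := by exact_mod_cast hk
        linarith
      rw [← Real.sqrt_mul (by positivity)]
      have hnat : n.choose ((k-1)+1) * ((k-1)+1) = n.choose (k-1) * (n - (k-1)) :=
        Nat.choose_succ_right_eq n (k-1)
      have hkk : k - 1 + 1 = k := by omega
      rw [hkk] at hnat
      have harg : (k:ℝ) * ((n:ℝ) + 1 - k) * (n.choose (k-1))
          = ((k:ℝ) * (k:ℝ)) * (n.choose k) := by
        have hc := congrArg (fun x : ℕ => (x:ℝ)) hnat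
        simp only [Nat.cast_mul] at hc
        rw [hcast] at hc
        nlinarith [hc]
      rw [harg, Real.sqrt_mul (by positivity), Real.sqrt_mul_self hk0]
    unfold aa pp
    have e3 : n - k + 1 = n - (k-1) := by omega
    have e4 : (Real.sqrt 3/2)^(n-(k-1)) = (Real.sqrt 3/2)^(n-k) * (Real.sqrt 3/2) := by
      rw [← pow_succ, e3]
    have e5 : ((1:ℝ)/2)^k = (1/2)^(k-1) * (1/2) := by
      rw [← pow_succ]; congr 1; omega
    rw [e4, e5]
    linear_combination ((1/2) * ((1/2:ℝ))^(k-1) * (Real.sqrt 3/2)^(n-k) * (Real.sqrt 3/2)) * key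
  · rw [aa_zero_of_gt (by omega), pp_zero hk, zero_mul, mul_zero]

noncomputable def rr (n k : ℕ) : ℝ := pp n k * ((n:ℝ) - 4*k) / Real.sqrt (3*(n:ℝ))
noncomputable def qq (n k : ℕ) : ℝ := |rr n k|

noncomputable def Lop (n : ℕ) (w : ℕ → ℝ) (k : ℕ) : ℝ :=
  -(Real.sqrt 3/2) * (aa n (k+1) * w (k+1) + aa n k * w (k-1)) - (1/2) * ((n:ℝ)/2 - k) * w k

lemma Lpp (n k : ℕ) : Lop n (pp n) k = -((n:ℝ)/2) * pp n k := by
  unfold Lop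
  rw [Rplus, Rminus]
  linear_combination (-((((n:ℝ)-k)/12 + (k:ℝ)/4)) * pp n k) * sqrt3_sq

lemma Rplus_r (n k : ℕ) : aa n (k+1) * rr n (k+1)
    = (Real.sqrt 3 * ((n:ℝ)-k)/6 * pp n k) * (((n:ℝ) - 4*k - 4) / Real.sqrt (3*(n:ℝ))) := by
  unfold rr
  rw [show aa n (k+1) * (pp n (k+1) * (((n:ℝ) - 4*((k+1:ℕ):ℝ))) / Real.sqrt (3*(n:ℝ)))
      = (aa n (k+1) * pp n (k+1)) * ((((n:ℝ) - 4*((k+1:ℕ):ℝ))) / Real.sqrt (3*(n:ℝ))) from by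
        ring, Rplus]
  push_cast; ring

lemma Rminus_r (n k : ℕ) : aa n k * rr n (k-1)
    = ((Real.sqrt 3/2) * k * pp n k) * (((n:ℝ) - 4*k + 4) / Real.sqrt (3*(n:ℝ))) := by
  rcases Nat.eq_zero_or_pos k with h0 | h0
  · subst h0
    have : aa n 0 = 0 := by unfold aa; simp
    rw [this]; push_cast; ring
  · unfold rr
    have hc : ((k-1 : ℕ):ℝ) = (k:ℝ) - 1 := by
      rw [Nat.cast_sub h0]; push_cast; ring
    rw [hc, show aa n k * (pp n (k-1) * (((n:ℝ) - 4*((k:ℝ)-1))) / Real.sqrt (3*(n:ℝ)))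
      = (aa n k * pp n (k-1)) * ((((n:ℝ) - 4*((k:ℝ)-1))) / Real.sqrt (3*(n:ℝ))) from by ring,
      Rminus]
    ring

lemma Lrr (n k : ℕ) : Lop n (rr n) k = -((n:ℝ)/2 - 1) * rr n k := by
  unfold Lop
  rw [Rplus_r, Rminus_r]
  unfold rr
  linear_combination ((-((((n:ℝ)-k)*((n:ℝ)-4*k-4))/12 - (k:ℝ)*((n:ℝ)-4*k+4)/4)
    * pp n k / Real.sqrt (3*(n:ℝ)))
    + (-(n:ℝ)*k/2 - 2*k + 2*(k:ℝ)^2) * pp n k / Real.sqrt (3*(n:ℝ))) * sqrt3_sq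

lemma qq_eq_low {n k : ℕ} (h : 4*k ≤ n) : qq n k = rr n k := by
  apply abs_of_nonneg
  unfold rr
  have h1 : (0:ℝ) ≤ (n:ℝ) - 4*k := by
    have : ((4*k : ℕ):ℝ) ≤ (n:ℝ) := by exact_mod_cast h
    push_cast at this; linarith
  have := pp_nonneg n k
  positivity

lemma qq_eq_high {n k : ℕ} (h : n ≤ 4*k) : qq n k = -rr n k := by
  apply abs_of_nonpos
  unfold rr
  have h1 : (n:ℝ) - 4*k ≤ 0 := by
    have : (n:ℝ) ≤ ((4*k : ℕ):ℝ) := by exact_mod_cast h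
    push_cast at this; linarith
  have h2 := pp_nonneg n k
  have h3 := Real.sqrt_nonneg (3*(n:ℝ))
  exact div_nonpos_of_nonpos_of_nonneg (mul_nonpos_of_nonneg_of_nonpos h2 h1) h3

lemma Lqq_ne {n m : ℕ} (hm : n = 4*m) {k : ℕ} (hk : k ≠ m) :
    Lop n (qq n) k = -((n:ℝ)/2 - 1) * qq n k := by
  rcases lt_or_gt_of_ne hk with h | h
  · have e1 : qq n (k+1) = rr n (k+1) := qq_eq_low (by omega)
    have e2 : qq n k = rr n k := qq_eq_low (by omega)
    have e3 : qq n (k-1) = rr n (k-1) := qq_eq_low (by omega)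
    have hLr := Lrr n k
    unfold Lop at hLr ⊢
    rw [e1, e2, e3]
    exact hLr
  · have e1 : qq n (k+1) = -rr n (k+1) := qq_eq_high (by omega)
    have e2 : qq n k = -rr n k := qq_eq_high (by omega)
    have e3 : qq n (k-1) = -rr n (k-1) := qq_eq_high (by omega)
    have hLr := Lrr n k
    unfold Lop at hLr ⊢
    rw [e1, e2, e3]
    linear_combination -hLr

lemma rr_m {n m : ℕ} (hm : n = 4*m) : rr n m = 0 := by
  unfold rr
  have : (n:ℝ) - 4*m = 0 := by subst hm; push_cast; ring
  rw [this, mul_zero, zero_div]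

lemma Lqq_m {n m : ℕ} (hm : n = 4*m) (hm1 : 1 ≤ m) :
    Lop n (qq n) m = -(Real.sqrt (3*(n:ℝ))/2) * pp n m := by
  have hq0 : qq n m = 0 := by unfold qq; rw [rr_m hm]; simp
  have e1 : qq n (m+1) = -rr n (m+1) := qq_eq_high (by omega)
  have e3 : qq n (m-1) = rr n (m-1) := qq_eq_low (by omega)
  have step : Lop n (qq n) m = -(6*(m:ℝ)/Real.sqrt (3*(n:ℝ))) * pp n m := by
    unfold Lop
    rw [e1, e3, hq0, mul_neg, Rplus_r, Rminus_r]
    have hnm : (n:ℝ) = 4*m := by exact_mod_cast hm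
    rw [hnm]
    linear_combination ((-(4*(m:ℝ)-m)*(4*(m:ℝ)-4*m-4)/12 + (m:ℝ)*(4*(m:ℝ)-4*m+4)/4)
      * pp n m / Real.sqrt (3*(4*(m:ℝ)))
      - 4*(m:ℝ) * pp n m / Real.sqrt (3*(4*(m:ℝ)))) * sqrt3_sq
  rw [step]
  have hT : Real.sqrt (3*(n:ℝ)) * Real.sqrt (3*(n:ℝ)) = 3*(n:ℝ) :=
    Real.mul_self_sqrt (by positivity)
  have hTpos : 0 < Real.sqrt (3*(n:ℝ)) := by
    apply Real.sqrt_pos.mpr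
    have : (1:ℝ) ≤ m := by exact_mod_cast hm1
    have hnm : (n:ℝ) = 4*m := by exact_mod_cast hm
    nlinarith
  have : 6*(m:ℝ)/Real.sqrt (3*(n:ℝ)) = Real.sqrt (3*(n:ℝ))/2 := by
    rw [div_eq_div_iff (ne_of_gt hTpos) (by norm_num : (2:ℝ) ≠ 0), hT]
    have hnm : (n:ℝ) = 4*m := by exact_mod_cast hm
    rw [hnm]; ring
  rw [this]


noncomputable def extv {n : ℕ} (w : Fin (n+1) → ℝ) : ℕ → ℝ :=
  fun k => if h : k < n+1 then w ⟨k, h⟩ else 0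

lemma extv_val {n : ℕ} (w : Fin (n+1) → ℝ) (k : Fin (n+1)) : extv w k.val = w k := by
  unfold extv
  rw [dif_pos k.isLt]

lemma Xop_mulVec (n : ℕ) (w : Fin (n+1) → ℝ) (k : Fin (n+1)) :
    (Xop n *ᵥ w) k = aa n (k.val+1) * extv w (k.val+1) + aa n k.val * extv w (k.val-1) := by
  have hsplit : ∀ j : Fin (n+1), Xop n k j * w j
      = (if k.val+1 = j.val then aa n j.val * w j else 0)
        + (if j.val+1 = k.val then aa n k.val * w j else 0) := by
    intro j
    unfold Xop aa
    split_ifs with h1 h2 h2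
    · omega
    · ring
    · ring
    · ring
  have hmv : (Xop n *ᵥ w) k = ∑ j, Xop n k j * w j := rfl
  rw [hmv, Finset.sum_congr rfl (fun j _ => hsplit j), Finset.sum_add_distrib]
  congr 1
  · by_cases hk : k.val < n
    · set j0 : Fin (n+1) := ⟨k.val+1, by omega⟩ with hj0
      have he : ∀ j : Fin (n+1), (if k.val+1 = j.val then aa n j.val * w j else 0)
          = (if j = j0 then aa n (k.val+1) * w j0 else 0) := by
        intro j
        by_cases h : j = j0
        · subst h; rw [if_pos rfl, if_pos rfl]
        · rw [if_neg h, if_neg]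
          intro hc
          exact h (Fin.ext (by simp [hj0, ← hc]))
      rw [Finset.sum_congr rfl (fun j _ => he j), Finset.sum_ite_eq' Finset.univ j0,
        if_pos (Finset.mem_univ j0)]
      unfold extv
      rw [dif_pos (by omega : k.val + 1 < n+1)]
    · have hkn : k.val = n := by have := k.isLt; omega
      have he : ∀ j : Fin (n+1), (if k.val+1 = j.val then aa n j.val * w j else 0) = 0 := by
        intro j
        rw [if_neg]
        have := j.isLt; omega
      rw [Finset.sum_congr rfl (fun j _ => he j), Finset.sum_const_zero]
      unfold extv
      rw [dif_neg (by omega), mul_zero]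
  · by_cases h0 : k.val = 0
    · have he : ∀ j : Fin (n+1), (if j.val+1 = k.val then aa n k.val * w j else 0) = 0 := by
        intro j
        rw [if_neg]; omega
      rw [Finset.sum_congr rfl (fun j _ => he j), Finset.sum_const_zero, h0]
      have : aa n 0 = 0 := by unfold aa; simp
      rw [this, zero_mul]
    · set j0 : Fin (n+1) := ⟨k.val-1, by omega⟩ with hj0
      have he : ∀ j : Fin (n+1), (if j.val+1 = k.val then aa n k.val * w j else 0)
          = (if j = j0 then aa n k.val * w j0 else 0) := by
        intro j
        by_cases h : j = j0
        · subst h; rw [if_pos (by simp [hj0]; omega), if_pos rfl]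
        · rw [if_neg h, if_neg]
          intro hc
          exact h (Fin.ext (by simp [hj0]; omega))
      rw [Finset.sum_congr rfl (fun j _ => he j), Finset.sum_ite_eq' Finset.univ j0,
        if_pos (Finset.mem_univ j0)]
      unfold extv
      rw [dif_pos (by omega : k.val - 1 < n+1)]

lemma stdBasis_mulVec (n : ℕ) (c : ℝ) (i : Fin (n+1)) (w : Fin (n+1) → ℝ) (k : Fin (n+1)) :
    (Matrix.single i i c *ᵥ w) k = if k = i then c * w i else 0 := by
  have hmv : (Matrix.single i i c *ᵥ w) k = ∑ j, Matrix.single i i c k j * w j :=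
    rfl
  rw [hmv]
  have he : ∀ j : Fin (n+1), Matrix.single i i c k j * w j
      = if j = i then (if k = i then c * w i else 0) else 0 := by
    intro j
    by_cases h1 : j = i
    · by_cases h2 : k = i
      · rw [if_pos h1, if_pos h2, h1, h2, Matrix.single_apply_same]
      · rw [if_pos h1, if_neg h2, h1,
          Matrix.single_apply_of_ne i i c k i (fun hc => h2 hc.1.symm), zero_mul]
    · rw [if_neg h1,
        Matrix.single_apply_of_ne i i c k j (fun hc => h1 hc.2.symm), zero_mul]
  rw [Finset.sum_congr rfl (fun j _ => he j), Finset.sum_ite_eq' Finset.univ i,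
    if_pos (Finset.mem_univ i)]

lemma Hspike_mulVec (n : ℕ) (α : ℝ) (w : Fin (n+1) → ℝ) (k : Fin (n+1)) :
    (Hspike n α *ᵥ w) k = Lop n (extv w) k.val
      + (if k = spikeIdx n then (3/8) * (n:ℝ)^α * w (spikeIdx n) else 0) := by
  unfold Hspike H0
  have hZ : (Zop n *ᵥ w) k = ((n:ℝ)/2 - k.val) * w k := by
    unfold Zop
    rw [Matrix.mulVec_diagonal]
  have hX := Xop_mulVec n w k
  unfold Lop
  simp only [Matrix.add_mulVec, Matrix.smul_mulVec, Pi.add_apply, Pi.smul_apply,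
    smul_eq_mul]
  rw [stdBasis_mulVec, hZ, hX, extv_val]
  ring


lemma rr_zero_of_gt {n k : ℕ} (h : n < k) : rr n k = 0 := by
  unfold rr; rw [pp_zero h, zero_mul, zero_div]

lemma qq_zero_of_gt {n k : ℕ} (h : n < k) : qq n k = 0 := by
  unfold qq; rw [rr_zero_of_gt h, abs_zero]

lemma extv_psi1 (n : ℕ) (k : ℕ) : extv (psi1 n) k = rr n k := by
  unfold extv
  by_cases h : k < n + 1
  · rw [dif_pos h]
    unfold psi1 rr pp
    have : Real.sqrt ((n.choose k : ℝ) / (3 * (n:ℝ)))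
        = Real.sqrt (n.choose k) / Real.sqrt (3 * (n:ℝ)) :=
      Real.sqrt_div (by positivity) _
    rw [this]
    ring
  · rw [dif_neg h, rr_zero_of_gt (by omega)]

lemma qq_eval (n k : ℕ) : qq n k = pp n k * |(n:ℝ) - 4*k| / Real.sqrt (3*(n:ℝ)) := by
  unfold qq rr
  rw [abs_div, abs_mul, abs_of_nonneg (pp_nonneg n k),
    abs_of_nonneg (Real.sqrt_nonneg _)]

-- the off-spike componentwise bound
lemma comp_ne {n m k : ℕ} (hm : n = 4*m) (hm1 : 1 ≤ m) (hk : k ≤ n) (hne : k ≠ m)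
    (x ε : ℝ) (hx : 0 < x) (hε : 0 < ε) (hε1 : ε ≤ 1)
    (hxe : x * (1-ε) * Real.sqrt (3*(n:ℝ)) = 4*ε) :
    (-((n:ℝ)/2 - 1) - ε) * (qq n k + x * pp n k)
      ≤ -((n:ℝ)/2 - 1) * qq n k + x * (-((n:ℝ)/2) * pp n k) := by
  have hT : 0 < Real.sqrt (3*(n:ℝ)) := by
    apply Real.sqrt_pos.mpr
    have : (1:ℝ) ≤ (n:ℝ) := by exact_mod_cast (by omega : 1 ≤ n)
    linarith
  have hpp := pp_nonneg n k
  have habs : 4 ≤ |(n:ℝ) - 4*k| := by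
    have hnm : (n:ℝ) = 4*(m:ℝ) := by exact_mod_cast hm
    rcases lt_or_gt_of_ne hne with h | h
    · have : (k:ℝ) + 1 ≤ m := by exact_mod_cast h
      rw [abs_of_nonneg (by linarith)]; linarith
    · have : (m:ℝ) + 1 ≤ k := by exact_mod_cast h
      rw [abs_of_nonpos (by linarith)]; linarith
  have hq : pp n k * 4 / Real.sqrt (3*(n:ℝ)) ≤ qq n k := by
    rw [qq_eval]
    gcongr
  have hstep : x*(1-ε)*pp n k ≤ ε * qq n k := by
    have h2 : ε * (pp n k * 4 / Real.sqrt (3*(n:ℝ))) ≤ ε * qq n k :=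
      mul_le_mul_of_nonneg_left hq hε.le
    have hTne : Real.sqrt (3*(n:ℝ)) ≠ 0 := ne_of_gt hT
    have h3 : ε * (pp n k * 4 / Real.sqrt (3*(n:ℝ))) = x*(1-ε)*pp n k := by
      rw [← mul_div_assoc, div_eq_iff hTne]
      linear_combination (-pp n k) * hxe
    linarith
  nlinarith [hstep]

lemma comp_m {n m : ℕ} (hm : n = 4*m) (x ε s : ℝ) (hpp : 0 < pp n m)
    (hx2 : Real.sqrt (3*(n:ℝ))/2 + (1-ε)*x ≤ s*x) :
    (-((n:ℝ)/2-1) - ε) * (qq n m + x*pp n m)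
      ≤ (-(Real.sqrt (3*(n:ℝ))/2) * pp n m + x*(-((n:ℝ)/2)*pp n m))
        + s*(qq n m + x*pp n m) := by
  have hq0 : qq n m = 0 := by unfold qq; rw [rr_m hm, abs_zero]
  rw [hq0]
  nlinarith [mul_le_mul_of_nonneg_left hx2 hpp.le]

lemma extv_v (n : ℕ) (x : ℝ) :
    extv (fun k : Fin (n+1) => qq n k.val + x * pp n k.val)
      = fun j => qq n j + x * pp n j := by
  funext j
  unfold extv
  by_cases h : j < n + 1
  · rw [dif_pos h]
  · rw [dif_neg h, qq_zero_of_gt (by omega), pp_zero (by omega), mul_zero, add_zero]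

lemma Lop_add_smul (n : ℕ) (f g : ℕ → ℝ) (x : ℝ) (k : ℕ) :
    Lop n (fun j => f j + x * g j) k = Lop n f k + x * Lop n g k := by
  unfold Lop; ring

lemma extv_q (n : ℕ) : extv (fun k : Fin (n+1) => qq n k.val) = qq n := by
  funext j
  unfold extv
  by_cases h : j < n + 1
  · rw [dif_pos h]
  · rw [dif_neg h, qq_zero_of_gt (by omega)]


theorem sorted_gap {N : ℕ} {A : Matrix (Fin N) (Fin N) ℝ} (hA : A.IsHermitian)
    (h1 : 1 < N) (μ θ : ℝ)
    (hlow : ∀ i, θ ≤ hA.eigenvalues i)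
    (hμ : ∃ j, hA.eigenvalues j = μ)
    (hlt : ∃ i, hA.eigenvalues i < μ) :
    sortedEigenvalues hA ⟨1, h1⟩ - sortedEigenvalues hA ⟨0, by omega⟩ ≤ μ - θ := by
  obtain ⟨j, hj⟩ := hμ
  obtain ⟨i, hi⟩ := hlt
  set σ := Tuple.sort hA.eigenvalues with hσ
  have mono : Monotone (hA.eigenvalues ∘ σ) := Tuple.monotone_sort hA.eigenvalues
  have happ : ∀ k, sortedEigenvalues hA k = hA.eigenvalues (σ k) := fun k => rfl
  have part1 : θ ≤ sortedEigenvalues hA ⟨0, by omega⟩ := by rw [happ]; exact hlow _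
  have hij : σ.symm i ≠ σ.symm j := by
    intro h
    have : i = j := σ.symm.injective h
    rw [this, hj] at hi; exact lt_irrefl _ hi
  have hvi : hA.eigenvalues (σ (σ.symm i)) = hA.eigenvalues i := by rw [Equiv.apply_symm_apply]
  have hvj : hA.eigenvalues (σ (σ.symm j)) = hA.eigenvalues j := by rw [Equiv.apply_symm_apply]
  have part2 : sortedEigenvalues hA ⟨1, h1⟩ ≤ μ := by
    by_cases h : (σ.symm i).val = 0
    · have hj0 : 1 ≤ (σ.symm j).val := by
        rcases Nat.eq_zero_or_pos (σ.symm j).val with h0 | h0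
        · exact absurd (Fin.ext (h.trans h0.symm)) hij
        · exact h0
      have : (⟨1, h1⟩ : Fin N) ≤ σ.symm j := hj0
      calc sortedEigenvalues hA ⟨1, h1⟩ ≤ hA.eigenvalues (σ (σ.symm j)) := mono this
        _ = μ := by rw [hvj, hj]
    · have hi0 : 1 ≤ (σ.symm i).val := Nat.one_le_iff_ne_zero.mpr h
      have : (⟨1, h1⟩ : Fin N) ≤ σ.symm i := hi0
      calc sortedEigenvalues hA ⟨1, h1⟩ ≤ hA.eigenvalues (σ (σ.symm i)) := mono this
        _ ≤ μ := by rw [hvi]; exact le_of_lt hi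
  linarith


set_option maxHeartbeats 1000000 in
/-- Upper bound on the spectral gap of the width-1 spike Hamiltonian at s*
when α > 1: gap(n) ≤ 3n/(3n + 3n^α - 8), so gap(n) = O(n^(1-α)) → 0. -/
theorem spike_gap_upper_bound (n : ℕ) (hn : 0 < n) (h4 : 4 ∣ n)
    (α : ℝ) (hα : 1 < α) (hbig : 8 < 3 * (n : ℝ)^α)
    (hH : (Hspike n α).IsHermitian) :
    sortedEigenvalues hH ⟨1, by omega⟩ - sortedEigenvalues hH ⟨0, by omega⟩
      ≤ 3 * (n : ℝ) / (3 * (n : ℝ) + 3 * (n : ℝ)^α - 8) := by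
  obtain ⟨m', hm'⟩ := h4
  have hm : n = 4 * (n / 4) := by omega
  set m := n / 4 with hmdef
  have hm1 : 1 ≤ m := by omega
  have hmn : m ≤ n := by omega
  have hspv : (spikeIdx n).val = m := rfl
  have hnpos : (0:ℝ) < n := by exact_mod_cast hn
  have h8 : (0:ℝ) < 3 * (n:ℝ)^α - 8 := by linarith
  have hT : 0 < Real.sqrt (3*(n:ℝ)) := Real.sqrt_pos.mpr (by linarith)
  have hTT : Real.sqrt (3*(n:ℝ)) * Real.sqrt (3*(n:ℝ)) = 3*(n:ℝ) :=
    Real.mul_self_sqrt (by linarith)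
  have hD : 0 < 3*(n:ℝ) + 3*(n:ℝ)^α - 8 := by linarith
  have hAne : (3*(n:ℝ)^α - 8) ≠ 0 := ne_of_gt h8
  have hDne : (3*(n:ℝ) + 3*(n:ℝ)^α - 8) ≠ 0 := ne_of_gt hD
  have hxpos : 0 < 4*Real.sqrt (3*(n:ℝ))/(3*(n:ℝ)^α - 8) := by positivity
  have hεpos : 0 < 3*(n:ℝ)/(3*(n:ℝ) + 3*(n:ℝ)^α - 8) := by positivity
  have hε1 : 3*(n:ℝ)/(3*(n:ℝ) + 3*(n:ℝ)^α - 8) ≤ 1 := by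
    rw [div_le_one hD]; linarith
  have e1 : 4*Real.sqrt (3*(n:ℝ))/(3*(n:ℝ)^α - 8) * (3*(n:ℝ)^α - 8)
      = 4*Real.sqrt (3*(n:ℝ)) := div_mul_cancel₀ _ hAne
  have e2 : 3*(n:ℝ)/(3*(n:ℝ) + 3*(n:ℝ)^α - 8) * (3*(n:ℝ) + 3*(n:ℝ)^α - 8)
      = 3*(n:ℝ) := div_mul_cancel₀ _ hDne
  have e3 : (1 - 3*(n:ℝ)/(3*(n:ℝ) + 3*(n:ℝ)^α - 8)) * (3*(n:ℝ) + 3*(n:ℝ)^α - 8)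
      = 3*(n:ℝ)^α - 8 := by
    have h : (1 - 3*(n:ℝ)/(3*(n:ℝ) + 3*(n:ℝ)^α - 8)) * (3*(n:ℝ) + 3*(n:ℝ)^α - 8)
        = (3*(n:ℝ) + 3*(n:ℝ)^α - 8)
          - 3*(n:ℝ)/(3*(n:ℝ) + 3*(n:ℝ)^α - 8) * (3*(n:ℝ) + 3*(n:ℝ)^α - 8) := by ring
    rw [h, e2]; ring
  have hxe : (4*Real.sqrt (3*(n:ℝ))/(3*(n:ℝ)^α - 8))
      * (1 - 3*(n:ℝ)/(3*(n:ℝ) + 3*(n:ℝ)^α - 8)) * Real.sqrt (3*(n:ℝ))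
      = 4*(3*(n:ℝ)/(3*(n:ℝ) + 3*(n:ℝ)^α - 8)) := by
    apply mul_right_cancel₀ (mul_ne_zero hDne hAne)
    linear_combination ((4*Real.sqrt (3*(n:ℝ))/(3*(n:ℝ)^α - 8)) * Real.sqrt (3*(n:ℝ))
        * (3*(n:ℝ)^α - 8)) * e3
      + (Real.sqrt (3*(n:ℝ)) * (3*(n:ℝ)^α - 8)) * e1
      + (4*(3*(n:ℝ)^α - 8)) * hTT - (4*(3*(n:ℝ)^α - 8)) * e2
  have hx2 : Real.sqrt (3*(n:ℝ))/2
      + (1 - 3*(n:ℝ)/(3*(n:ℝ) + 3*(n:ℝ)^α - 8)) * (4*Real.sqrt (3*(n:ℝ))/(3*(n:ℝ)^α - 8))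
      ≤ (3/8*(n:ℝ)^α) * (4*Real.sqrt (3*(n:ℝ))/(3*(n:ℝ)^α - 8)) := by
    have hkey : (3/8*(n:ℝ)^α) * (4*Real.sqrt (3*(n:ℝ))/(3*(n:ℝ)^α - 8))
        - (1 - 3*(n:ℝ)/(3*(n:ℝ) + 3*(n:ℝ)^α - 8)) * (4*Real.sqrt (3*(n:ℝ))/(3*(n:ℝ)^α - 8))
        - Real.sqrt (3*(n:ℝ))/2
        = 4*Real.sqrt (3*(n:ℝ))/(3*(n:ℝ)^α - 8)
          - 4*Real.sqrt (3*(n:ℝ))/(3*(n:ℝ) + 3*(n:ℝ)^α - 8) := by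
      rw [div_sub_div _ _ hAne hDne, eq_div_iff (mul_ne_zero hAne hDne)]
      linear_combination ((3/8*(n:ℝ)^α - 1 + 3*(n:ℝ)/(3*(n:ℝ) + 3*(n:ℝ)^α - 8))
        * (3*(n:ℝ) + 3*(n:ℝ)^α - 8)) * e1 + (4*Real.sqrt (3*(n:ℝ))) * e2
    have hmono : 4*Real.sqrt (3*(n:ℝ))/(3*(n:ℝ) + 3*(n:ℝ)^α - 8)
        ≤ 4*Real.sqrt (3*(n:ℝ))/(3*(n:ℝ)^α - 8) := by
      apply div_le_div_of_nonneg_left (by positivity) h8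
      linarith
    linarith
  have hqm0 : qq n m = 0 := by unfold qq; rw [rr_m hm, abs_zero]
  -- positivity of Perron vector
  have hvpos : ∀ k : Fin (n+1), 0 < qq n k.val
      + (4*Real.sqrt (3*(n:ℝ))/(3*(n:ℝ)^α - 8)) * pp n k.val := by
    intro k
    have h1 : 0 ≤ qq n k.val := abs_nonneg _
    have h2 : 0 < pp n k.val := pp_pos (by omega : k.val ≤ n)
    nlinarith
  -- off-diagonal nonpositivity
  have hoff : ∀ i j : Fin (n+1), i ≠ j → Hspike n α i j ≤ 0 := by
    intro i j hij
    have hZ : Zop n i j = 0 := Matrix.diagonal_apply_ne _ hij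
    have hX : 0 ≤ Xop n i j := by
      unfold Xop
      split_ifs <;> positivity
    have hstd : Matrix.single (spikeIdx n) (spikeIdx n) ((3:ℝ)/8 * (n:ℝ)^α) i j = 0 :=
      Matrix.single_apply_of_ne _ _ _ _ _ (fun hc => hij (hc.1.symm.trans hc.2))
    have hs3 := sqrt3_pos
    unfold Hspike H0
    simp only [Matrix.add_apply, Matrix.smul_apply, smul_eq_mul, hZ, hstd, mul_zero, add_zero]
    nlinarith
  -- per-component Collatz inequality
  have hcomp : ∀ k : Fin (n+1),
      (-((n:ℝ)/2 - 1) - 3*(n:ℝ)/(3*(n:ℝ) + 3*(n:ℝ)^α - 8))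
        * (qq n k.val + (4*Real.sqrt (3*(n:ℝ))/(3*(n:ℝ)^α - 8)) * pp n k.val)
      ≤ (Hspike n α *ᵥ (fun k : Fin (n+1) => qq n k.val
          + (4*Real.sqrt (3*(n:ℝ))/(3*(n:ℝ)^α - 8)) * pp n k.val)) k := by
    intro k
    rw [Hspike_mulVec, extv_v, Lop_add_smul, Lpp]
    by_cases hkm : k.val = m
    · have hks : k = spikeIdx n := Fin.ext (by rw [hkm, hspv])
      rw [if_pos hks, hks, hspv]
      rw [Lqq_m hm hm1]
      have hcm := comp_m hm (4*Real.sqrt (3*(n:ℝ))/(3*(n:ℝ)^α - 8))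
        (3*(n:ℝ)/(3*(n:ℝ) + 3*(n:ℝ)^α - 8)) (3/8*(n:ℝ)^α) (pp_pos hmn) hx2
      beta_reduce
      linarith [hcm]
    · have hks : ¬(k = spikeIdx n) := fun h => hkm (by rw [h, hspv])
      rw [if_neg hks, add_zero, Lqq_ne hm hkm]
      have hcn := comp_ne hm hm1 (by omega : k.val ≤ n) hkm
        (4*Real.sqrt (3*(n:ℝ))/(3*(n:ℝ)^α - 8))
        (3*(n:ℝ)/(3*(n:ℝ) + 3*(n:ℝ)^α - 8)) hxpos hεpos hε1 hxe
      linarith [hcn]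
  -- all eigenvalues bounded below
  have hlow : ∀ i, -((n:ℝ)/2 - 1) - 3*(n:ℝ)/(3*(n:ℝ) + 3*(n:ℝ)^α - 8)
      ≤ hH.eigenvalues i := by
    intro i
    apply collatz_bound n (Hspike n α) hoff _ hvpos _ hcomp (hH.eigenvalues i)
      (hH.eigenvectorBasis i)
    · intro h
      apply hH.eigenvectorBasis.orthonormal.ne_zero i
      ext j
      exact congrFun h j
    · exact hH.mulVec_eigenvectorBasis i
  -- psi1 is an eigenvector of eigenvalue -(n/2-1)
  have hre : extv (psi1 n) = rr n := funext (extv_psi1 n)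
  have hps0 : psi1 n (spikeIdx n) = 0 := by
    unfold psi1
    have hz : (n:ℝ) - 4 * ((spikeIdx n).val : ℝ) = 0 := by
      rw [hspv]
      have : (n:ℝ) = 4*(m:ℝ) := by exact_mod_cast hm
      linarith
    rw [hz, mul_zero]
  have hpsi1eig : Hspike n α *ᵥ psi1 n = (-((n:ℝ)/2 - 1)) • psi1 n := by
    funext k
    rw [Hspike_mulVec, hre, Lrr, hps0, mul_zero]
    have h1 : (if k = spikeIdx n then (0:ℝ) else 0) = 0 := ite_self 0
    rw [h1, add_zero]
    have h2 : rr n k.val = psi1 n k := by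
      rw [← hre]; exact extv_val (psi1 n) k
    rw [h2, Pi.smul_apply, smul_eq_mul]
  have hpsi1ne : psi1 n ≠ 0 := by
    intro h
    have hrr0 : 0 < rr n 0 := by
      unfold rr
      apply div_pos ?_ hT
      apply mul_pos (pp_pos (Nat.zero_le n))
      rw [Nat.cast_zero]; linarith
    have h2 : rr n 0 = 0 := by
      rw [← extv_psi1 n 0]
      unfold extv
      rw [dif_pos (Nat.succ_pos n), h]
      rfl
    linarith
  have hμex : ∃ j, hH.eigenvalues j = -((n:ℝ)/2 - 1) :=
    eig_exists (n+1) (Hspike n α) hH _ (psi1 n) hpsi1ne hpsi1eig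
  -- existence of an eigenvalue strictly below -(n/2-1)
  have hlt : ∃ i, hH.eigenvalues i < -((n:ℝ)/2 - 1) := by
    by_contra hcon
    push_neg at hcon
    have hextq := extv_q n
    have hHqk : ∀ k : Fin (n+1), k ≠ spikeIdx n →
        (Hspike n α *ᵥ (fun j : Fin (n+1) => qq n j.val)) k
          = -((n:ℝ)/2-1) * qq n k.val := by
      intro k hk
      rw [Hspike_mulVec, hextq, if_neg hk, add_zero,
        Lqq_ne hm (fun hkk => hk (Fin.ext (hkk.trans hspv.symm)))]
    have hHqs : (Hspike n α *ᵥ (fun j : Fin (n+1) => qq n j.val)) (spikeIdx n)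
        = -(Real.sqrt (3*(n:ℝ))/2) * pp n m := by
      rw [Hspike_mulVec, hextq, if_pos rfl, hspv, Lqq_m hm hm1]
      beta_reduce
      rw [hqm0, mul_zero, add_zero]
    have hqHq : (fun j : Fin (n+1) => qq n j.val)
          ⬝ᵥ (Hspike n α *ᵥ (fun j : Fin (n+1) => qq n j.val))
        = -((n:ℝ)/2-1) * ((fun j : Fin (n+1) => qq n j.val)
          ⬝ᵥ (fun j : Fin (n+1) => qq n j.val)) := by
      unfold dotProduct
      rw [Finset.mul_sum]
      apply Finset.sum_congr rfl
      intro k _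
      beta_reduce
      by_cases hk : k = spikeIdx n
      · have hq0 : qq n k.val = 0 := by rw [hk, hspv]; exact hqm0
        rw [hq0, zero_mul, zero_mul, mul_zero]
      · rw [hHqk k hk]; ring
    have heval : (Hspike n α *ᵥ Pi.single (spikeIdx n) (1:ℝ)) (spikeIdx n)
        = -(1/2)*((n:ℝ)/2 - (m:ℝ)) + 3/8*(n:ℝ)^α := by
      rw [Hspike_mulVec, if_pos rfl, Pi.single_eq_same, mul_one, hspv]
      have ee1 : extv (Pi.single (spikeIdx n) (1:ℝ)) (m+1) = 0 := by
        unfold extv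
        rw [dif_pos (show m+1 < n+1 by omega)]
        exact Pi.single_eq_of_ne (Fin.ne_of_val_ne (by omega : m+1 ≠ n/4)) 1
      have ee2 : extv (Pi.single (spikeIdx n) (1:ℝ)) (m-1) = 0 := by
        unfold extv
        rw [dif_pos (show m-1 < n+1 by omega)]
        exact Pi.single_eq_of_ne (Fin.ne_of_val_ne (by omega : m-1 ≠ n/4)) 1
      have ee3 : extv (Pi.single (spikeIdx n) (1:ℝ)) m = 1 := by
        unfold extv
        rw [dif_pos (show m < n+1 by omega)]
        have : (⟨m, show m < n+1 by omega⟩ : Fin (n+1)) = spikeIdx n :=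
          Fin.ext rfl
        rw [this, Pi.single_eq_same]
      unfold Lop
      rw [ee1, ee2, ee3]
      ring
    have hsymm : (Hspike n α)ᵀ = Hspike n α := hH
    have hsym : ∀ vv ww : Fin (n+1) → ℝ,
        vv ⬝ᵥ (Hspike n α *ᵥ ww) = (Hspike n α *ᵥ vv) ⬝ᵥ ww := by
      intro vv ww
      rw [Matrix.dotProduct_mulVec, ← Matrix.vecMul_transpose, hsymm]
    have hPpos : 0 < Real.sqrt (3*(n:ℝ))/2 * pp n m :=
      mul_pos (by positivity) (pp_pos hmn)
    set HE := -(1/2)*((n:ℝ)/2 - (m:ℝ)) + 3/8*(n:ℝ)^α with hHEdef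
    set P := Real.sqrt (3*(n:ℝ))/2 * pp n m with hPdef
    set δ := P / max (HE - (-((n:ℝ)/2 - 1))) 1 with hδdef
    have hmax1 : (0:ℝ) < max (HE - (-((n:ℝ)/2-1))) 1 :=
      lt_of_lt_of_le one_pos (le_max_right _ _)
    have hδpos : 0 < δ := div_pos hPpos hmax1
    have hδmax : δ * (HE - (-((n:ℝ)/2-1))) ≤ P := by
      calc δ * (HE - (-((n:ℝ)/2-1))) ≤ δ * max (HE - (-((n:ℝ)/2-1))) 1 :=
            mul_le_mul_of_nonneg_left (le_max_left _ _) hδpos.le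
        _ = P := by rw [hδdef]; exact div_mul_cancel₀ _ (ne_of_gt hmax1)
    have c2 : (fun j : Fin (n+1) => qq n j.val)
        ⬝ᵥ (Hspike n α *ᵥ Pi.single (spikeIdx n) (1:ℝ)) = -P := by
      rw [hsym, dotProduct_single, hHqs, mul_one, hPdef]; ring
    have c3 : (Pi.single (spikeIdx n) (1:ℝ))
        ⬝ᵥ (Hspike n α *ᵥ (fun j : Fin (n+1) => qq n j.val)) = -P := by
      rw [single_dotProduct, hHqs, one_mul, hPdef]; ring
    have c4 : (Pi.single (spikeIdx n) (1:ℝ))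
        ⬝ᵥ (Hspike n α *ᵥ Pi.single (spikeIdx n) (1:ℝ)) = HE := by
      rw [single_dotProduct, heval, one_mul, hHEdef]
    have c5 : (fun j : Fin (n+1) => qq n j.val) ⬝ᵥ Pi.single (spikeIdx n) (1:ℝ) = 0 := by
      rw [dotProduct_single]
      beta_reduce
      rw [hspv, hqm0, zero_mul]
    have c6 : (Pi.single (spikeIdx n) (1:ℝ)) ⬝ᵥ (fun j : Fin (n+1) => qq n j.val) = 0 := by
      rw [single_dotProduct]
      beta_reduce
      rw [hspv, hqm0, mul_zero]
    have c7 : (Pi.single (spikeIdx n) (1:ℝ)) ⬝ᵥ (Pi.single (spikeIdx n) (1:ℝ)) = 1 := by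
      rw [single_dotProduct, Pi.single_eq_same, mul_one]
    have hquad := quad_lower (n+1) (Hspike n α) hH (-((n:ℝ)/2-1)) hcon
      ((fun j : Fin (n+1) => qq n j.val) + δ • (Pi.single (spikeIdx n) 1 : Fin (n+1) → ℝ))
    rw [Matrix.mulVec_add, Matrix.mulVec_smul] at hquad
    simp only [add_dotProduct, dotProduct_add, smul_dotProduct,
      dotProduct_smul, smul_eq_mul] at hquad
    rw [hqHq, c2, c3, c4, c5, c6, c7] at hquad
    have h9 : δ * (δ * (HE - (-((n:ℝ)/2-1)))) ≤ δ * P :=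
      mul_le_mul_of_nonneg_left hδmax hδpos.le
    have h10 : 0 < δ * P := mul_pos hδpos hPpos
    nlinarith [hquad, h9, h10]
  have hfin := sorted_gap hH (by omega : 1 < n+1) (-((n:ℝ)/2 - 1))
    (-((n:ℝ)/2 - 1) - 3*(n:ℝ)/(3*(n:ℝ) + 3*(n:ℝ)^α - 8)) hlow hμex hlt
  have hend : -((n:ℝ)/2 - 1) - (-((n:ℝ)/2 - 1) - 3*(n:ℝ)/(3*(n:ℝ) + 3*(n:ℝ)^α - 8))
      = 3 * (n:ℝ) / (3 * (n:ℝ) + 3 * (n:ℝ)^α - 8) := by ring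
  exact hfin.trans (le_of_eq hend)
end

section
/- With |psi_1> the first excited state of the spikeless H_0 = -(sqrt(3)/2)X - (1/2)Z (having <n/4|psi_1> = 0 when n is divisible by 4), |psi_1> is also an eigenvector of the spike Hamiltonian H = H_0 + (3/8) n^alpha |n/4><n/4| with the same eigenvalue -(n/2 - 1). -/
open Matrix

private lemma sum_eq_at {n : ℕ} (f : Fin (n + 1) → ℝ) (c : ℕ) (hc : c ≤ n)
    (h : ∀ j : Fin (n + 1), j.val ≠ c → f j = 0) :
    ∑ j, f j = f ⟨c, by omega⟩ := by
  apply Finset.sum_eq_single_of_mem _ (Finset.mem_univ _)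
  intro b _ hb
  exact h b (fun hv => hb (Fin.ext hv))

private lemma sum_eq_at2 {n : ℕ} (f : Fin (n + 1) → ℝ) (c d : ℕ) (hc : c ≤ n) (hd : d ≤ n)
    (hcd : c ≠ d)
    (h : ∀ j : Fin (n + 1), j.val ≠ c → j.val ≠ d → f j = 0) :
    ∑ j, f j = f ⟨c, by omega⟩ + f ⟨d, by omega⟩ := by
  apply Finset.sum_eq_add_of_mem _ _ (Finset.mem_univ _) (Finset.mem_univ _)
  · intro hcontra
    exact hcd (by simpa [Fin.ext_iff] using hcontra)
  · intro b _ hb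
    exact h b (fun hv => hb.1 (Fin.ext hv)) (fun hv => hb.2 (Fin.ext hv))

private lemma key1 (n m : ℕ) (h : m < n) :
    Real.sqrt (((m + 1 : ℕ) : ℝ) * ((n : ℝ) + 1 - ((m + 1 : ℕ) : ℝ))) *
      Real.sqrt ((n.choose (m + 1) : ℝ) / (3 * (n : ℝ))) =
    ((n : ℝ) - m) * Real.sqrt ((n.choose m : ℝ) / (3 * (n : ℝ))) := by
  have hnm : (0:ℝ) ≤ (n : ℝ) - m := by
    have : (m:ℝ) ≤ n := by exact_mod_cast h.le
    linarith
  have hc : ((n.choose (m + 1) : ℕ) : ℝ) * ((m : ℝ) + 1) = (n.choose m : ℝ) * ((n : ℝ) - m) := by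
    have h0 := Nat.choose_succ_right_eq n m
    have h1 : ((n.choose (m+1) * (m+1) : ℕ) : ℝ) = ((n.choose m * (n - m) : ℕ) : ℝ) := by
      exact_mod_cast h0
    push_cast [Nat.cast_sub h.le] at h1
    linarith
  push_cast
  rw [← Real.sqrt_mul (by nlinarith)]
  rw [show ((m:ℝ) + 1) * ((n : ℝ) + 1 - ((m:ℝ) + 1)) * ((n.choose (m + 1) : ℝ) / (3 * (n : ℝ)))
      = ((n : ℝ) - m) ^ 2 * ((n.choose m : ℝ) / (3 * (n : ℝ))) from by
    linear_combination (((n:ℝ) - m) / (3 * (n:ℝ))) * hc]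
  rw [Real.sqrt_mul (sq_nonneg _), Real.sqrt_sq hnm]

private lemma key2 (n m : ℕ) (h0 : 0 < m) (h : m ≤ n) :
    Real.sqrt ((m : ℝ) * ((n : ℝ) + 1 - (m : ℝ))) *
      Real.sqrt ((n.choose (m - 1) : ℝ) / (3 * (n : ℝ))) =
    (m : ℝ) * Real.sqrt ((n.choose m : ℝ) / (3 * (n : ℝ))) := by
  have hnm : (m:ℝ) ≤ n := by exact_mod_cast h
  have hc : (n.choose m : ℝ) * (m : ℝ) = (n.choose (m - 1) : ℝ) * ((n : ℝ) + 1 - m) := by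
    have h0' := Nat.choose_succ_right_eq n (m - 1)
    rw [show m - 1 + 1 = m from by omega] at h0'
    have h1 : ((n.choose m * m : ℕ) : ℝ) = ((n.choose (m-1) * (n - (m-1)) : ℕ) : ℝ) := by
      exact_mod_cast h0'
    push_cast [Nat.cast_sub (show m - 1 ≤ n from by omega), Nat.cast_sub (show 1 ≤ m from h0)] at h1
    linarith
  rw [← Real.sqrt_mul (by nlinarith [(show (0:ℝ) < m from by exact_mod_cast h0), hnm])]
  rw [show (m : ℝ) * ((n : ℝ) + 1 - (m : ℝ)) * ((n.choose (m - 1) : ℝ) / (3 * (n : ℝ)))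
      = ((m : ℝ)) ^ 2 * ((n.choose m : ℝ) / (3 * (n : ℝ))) from by
    linear_combination (-(m:ℝ) / (3 * (n:ℝ))) * hc]
  rw [Real.sqrt_mul (sq_nonneg _), Real.sqrt_sq (by positivity)]

/-- Since ⟨n/4|ψ₁⟩ = 0 when 4 ∣ n, the first excited state of the spikeless
Hamiltonian remains an eigenvector of the spike Hamiltonian with the same
eigenvalue -(n/2 - 1). -/
theorem psi1_eigenvector_of_spike (n : ℕ) (hn : 0 < n) (h4 : 4 ∣ n) (α : ℝ) :
    (Hspike n α).mulVec (psi1 n) = (-((n : ℝ)/2 - 1)) • psi1 n := by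
  have hn4 : 4 ≤ n := Nat.le_of_dvd hn h4
  have hpsi_spike : psi1 n (spikeIdx n) = 0 := by
    unfold psi1 spikeIdx
    have h1 : ((4 * (n / 4) : ℕ) : ℝ) = (n : ℝ) := by
      rw [Nat.mul_div_cancel' h4]
    push_cast at h1
    simp only
    rw [show ((n : ℝ) - 4 * ((n / 4 : ℕ) : ℝ)) = 0 from by linarith, mul_zero]
  funext k
  rw [Hspike, Matrix.add_mulVec, Pi.add_apply]
  have hspike0 : (Matrix.single (spikeIdx n) (spikeIdx n)
      ((3/8) * (n : ℝ)^α)).mulVec (psi1 n) k = 0 := by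
    simp only [Matrix.mulVec, dotProduct, Matrix.single, Matrix.of_apply]
    apply Finset.sum_eq_zero
    intro j _
    split_ifs with h
    · rw [← h.2, hpsi_spike, mul_zero]
    · rw [zero_mul]
  rw [hspike0, add_zero]
  rw [H0, Matrix.add_mulVec, Matrix.smul_mulVec, Matrix.smul_mulVec,
    Pi.add_apply, Pi.smul_apply, Pi.smul_apply]
  rw [Zop, Matrix.mulVec_diagonal]
  have hXsum : (Xop n).mulVec (psi1 n) k = ∑ j, Xop n k j * psi1 n j := rfl
  rw [hXsum]
  have hk : k.val ≤ n := by omega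
  have h33 : Real.sqrt 3 * Real.sqrt 3 = 3 := Real.mul_self_sqrt (by norm_num)
  rcases Nat.lt_or_ge k.val n with hlt | hge
  · have hk1 := key1 n k.val hlt
    push_cast at hk1
    rcases Nat.eq_zero_or_pos k.val with h0 | hpos
    · -- k = 0 : support at j = k.val + 1
      rw [sum_eq_at _ (k.val + 1) (by omega) ?side]
      case side =>
        intro j hj
        have e0 : Xop n k j = 0 := by
          simp only [Xop]; rw [if_neg (by omega), if_neg (by omega)]
        rw [e0, zero_mul]
      simp only [Xop, psi1, Pi.smul_apply, smul_eq_mul]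
      rw [if_pos trivial]
      have hu0 : (Real.sqrt 3 / 2) ^ (n - k.val)
          = (Real.sqrt 3 / 2) ^ (n - (k.val + 1)) * (Real.sqrt 3 / 2) := by
        conv_lhs => rw [show n - k.val = (n - (k.val + 1)) + 1 from by omega]
        rw [pow_succ]
      have hp1 : ((1:ℝ)/2) ^ (k.val + 1) = (1/2) ^ k.val * (1/2) := pow_succ _ _
      rw [hu0, hp1]
      have hzero : ((k.val : ℕ) : ℝ) = 0 := by rw [h0]; norm_num
      push_cast
      linear_combination (-(Real.sqrt 3) / 8 * (1/2 : ℝ)^k.val *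
          (Real.sqrt 3 / 2)^(n - (k.val + 1)) * ((n:ℝ) - 4*(k.val:ℝ) - 4)) * hk1
        + (Real.sqrt 3 * (Real.sqrt 3 / 2)^(n - (k.val + 1)) *
          Real.sqrt ((n.choose k.val : ℝ) / (3 * (n:ℝ))) * (1/2 : ℝ)^k.val *
          ((3/8)*(n:ℝ) + 3/2 - (3/2)*(k.val:ℝ))) * hzero
    · -- 0 < k < n : support at k ± 1
      have hk2 := key2 n k.val hpos hk
      push_cast at hk2
      rw [sum_eq_at2 _ (k.val + 1) (k.val - 1) (by omega) (by omega) (by omega) ?supp]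
      case supp =>
        intro j hj1 hj2
        have e0 : Xop n k j = 0 := by
          simp only [Xop]; rw [if_neg (by omega), if_neg (by omega)]
        rw [e0, zero_mul]
      simp only [Xop, psi1, Pi.smul_apply, smul_eq_mul]
      rw [if_pos trivial, if_neg (by omega), if_pos (by omega)]
      have hu0 : (Real.sqrt 3 / 2) ^ (n - k.val)
          = (Real.sqrt 3 / 2) ^ (n - (k.val + 1)) * (Real.sqrt 3 / 2) := by
        conv_lhs => rw [show n - k.val = (n - (k.val + 1)) + 1 from by omega]
        rw [pow_succ]
      have hu2 : (Real.sqrt 3 / 2) ^ (n - (k.val - 1))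
          = (Real.sqrt 3 / 2) ^ (n - (k.val + 1)) * (3/4) := by
        rw [show n - (k.val - 1) = (n - (k.val + 1)) + 2 from by omega, pow_add]
        congr 1
        rw [div_pow, Real.sq_sqrt (by norm_num : (0:ℝ) ≤ 3)]
        norm_num
      have hp1 : ((1:ℝ)/2) ^ (k.val + 1) = (1/2) ^ k.val * (1/2) := pow_succ _ _
      have hp2 : ((1:ℝ)/2) ^ (k.val - 1) = 2 * (1/2) ^ k.val := by
        have h5 := pow_succ ((1:ℝ)/2) (k.val - 1)
        rw [show k.val - 1 + 1 = k.val from by omega] at h5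
        linarith
      rw [hu2, hu0, hp1, hp2]
      push_cast [Nat.cast_sub (show 1 ≤ k.val from hpos)]
      linear_combination (-(Real.sqrt 3) / 8 * (1/2 : ℝ)^k.val *
          (Real.sqrt 3 / 2)^(n - (k.val + 1)) * ((n:ℝ) - 4*(k.val:ℝ) - 4)) * hk1
        + (-(3 * Real.sqrt 3) / 8 * (1/2 : ℝ)^k.val *
          (Real.sqrt 3 / 2)^(n - (k.val + 1)) * ((n:ℝ) - 4*(k.val:ℝ) + 4)) * hk2
  · -- k.val = n : support at k - 1
    have hge' : k.val = n := by omega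
    have hpos : 0 < k.val := by omega
    have hk2 := key2 n k.val hpos hk
    push_cast at hk2
    rw [sum_eq_at _ (k.val - 1) (by omega) ?side]
    case side =>
      intro j hj
      have e0 : Xop n k j = 0 := by
        simp only [Xop]; rw [if_neg (by omega), if_neg (by omega)]
      rw [e0, zero_mul]
    simp only [Xop, psi1, Pi.smul_apply, smul_eq_mul]
    rw [if_neg (by omega), if_pos (by omega)]
    have hu2 : (Real.sqrt 3 / 2) ^ (n - (k.val - 1))
        = (Real.sqrt 3 / 2) ^ (n - k.val) * (Real.sqrt 3 / 2) := by
      conv_lhs => rw [show n - (k.val - 1) = (n - k.val) + 1 from by omega]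
      rw [pow_succ]
    have hp2 : ((1:ℝ)/2) ^ (k.val - 1) = 2 * (1/2) ^ k.val := by
      have h5 := pow_succ ((1:ℝ)/2) (k.val - 1)
      rw [show k.val - 1 + 1 = k.val from by omega] at h5
      linarith
    rw [hu2, hp2]
    push_cast [Nat.cast_sub (show 1 ≤ k.val from hpos)]
    have hkn : ((k.val : ℕ) : ℝ) = (n : ℝ) := by rw [hge']
    linear_combination (-(Real.sqrt 3) / 2 * (1/2 : ℝ)^k.val *
        ((Real.sqrt 3 / 2)^(n - k.val) * (Real.sqrt 3 / 2)) * ((n:ℝ) - 4*(k.val:ℝ) + 4)) * hk2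
      + (-(1/4 : ℝ) * (k.val : ℝ) * Real.sqrt ((n.choose k.val : ℝ) / (3 * (n:ℝ))) *
        (1/2 : ℝ)^k.val * (Real.sqrt 3 / 2)^(n - k.val) * ((n:ℝ) - 4*(k.val:ℝ) + 4)) * h33
      + ((Real.sqrt 3 / 2)^(n - k.val) * Real.sqrt ((n.choose k.val : ℝ) / (3 * (n:ℝ))) *
        (1/2 : ℝ)^k.val * ((k.val:ℝ) - (n:ℝ)/4 + 1)) * hkn
end
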